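/- arXiv:1305.0470 — 3 statements merged into one kernel-verified Lean document; each statement's English description precedes it below -/
import Mathlib

section
/- Let n ≥ 3 and let u be a choreography in X⁽ⁿ⁾ with symmetry group G ≤ Γ × Ŝ¹. Then every element of ker ρ and every element of ker σ has non-time-reversing τ-component (i.e. τ(ker ρ) ⊆ S¹ and τ(ker σ) ⊆ S¹), and every element of ker τ has ρ-component in SO(2) (i.e. ρ(ker τ) ⊆ SO(2)). Consequently τ restricts to injective homomorphisms ker ρ → S¹ and ker σ → S¹, and ρ restricts to an injective homomorphism ker τ → SO(2); in particular, when G is finite, the groups ker ρ, ker σ and ker τ are cyclic. -/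
noncomputable section

open Complex

/-- The time circle `𝕋 = ℝ/ℤ`. -/
abbrev TimeCircle : Type := AddCircle (1 : ℝ)

/-- The group `Ŝ¹` of rotations and reflections of the time circle: the element
`⟨θ, false⟩` is the rotation `t ↦ θ + t` and `⟨θ, true⟩` is the reflection `t ↦ θ - t`. -/
@[ext] structure TimeSym : Type where
  shift : TimeCircle
  rev : Bool

namespace TimeSym

/-- The action of an element of `Ŝ¹` on the time circle. -/
def act (g : TimeSym) (t : TimeCircle) : TimeCircle :=
  g.shift + (if g.rev then -t else t)

instance : One TimeSym := ⟨⟨0, false⟩⟩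
instance : Mul TimeSym :=
  ⟨fun g h => ⟨g.shift + (if g.rev then -h.shift else h.shift), xor g.rev h.rev⟩⟩
instance : Inv TimeSym := ⟨fun g => ⟨if g.rev then g.shift else -g.shift, g.rev⟩⟩

@[simp] lemma one_shift : (1 : TimeSym).shift = 0 := rfl
@[simp] lemma one_rev : (1 : TimeSym).rev = false := rfl
@[simp] lemma mul_shift (g h : TimeSym) :
    (g * h).shift = g.shift + (if g.rev then -h.shift else h.shift) := rfl
@[simp] lemma mul_rev (g h : TimeSym) : (g * h).rev = xor g.rev h.rev := rfl
@[simp] lemma inv_shift (g : TimeSym) :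
    g⁻¹.shift = if g.rev then g.shift else -g.shift := rfl
@[simp] lemma inv_rev (g : TimeSym) : g⁻¹.rev = g.rev := rfl

instance : Group TimeSym where
  mul_assoc a b c := by
    obtain ⟨sa, ra⟩ := a; obtain ⟨sb, rb⟩ := b; obtain ⟨sc, rc⟩ := c
    ext
    · simp only [mul_shift, mul_rev]
      cases ra <;> cases rb <;> simp <;> abel
    · simp [Bool.xor_assoc]
  one_mul a := by ext <;> simp
  mul_one a := by obtain ⟨sa, ra⟩ := a; ext <;> cases ra <;> simp
  inv_mul_cancel a := by obtain ⟨sa, ra⟩ := a; ext <;> cases ra <;> simp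

@[simp] lemma act_one (t : TimeCircle) : (1 : TimeSym).act t = t := by simp [act]

@[simp] lemma act_mul (g h : TimeSym) (t : TimeCircle) :
    (g * h).act t = g.act (h.act t) := by
  obtain ⟨sg, rg⟩ := g; obtain ⟨sh, rh⟩ := h
  simp only [act, mul_shift, mul_rev]
  cases rg <;> cases rh <;> simp <;> abel

/-- The rotation `t ↦ θ + t` of the time circle, as an element of `Ŝ¹`. -/
def trot (θ : ℝ) : TimeSym := ⟨(θ : TimeCircle), false⟩

/-- The reflection `t ↦ θ - t` of the time circle, as an element of `Ŝ¹`. -/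
def tref (θ : ℝ) : TimeSym := ⟨(θ : TimeCircle), true⟩

end TimeSym

/-- The orthogonal group `O(2)`, realised as the group of `ℝ`-linear isometries of `ℂ`. -/
abbrev O2 : Type := ℂ ≃ₗᵢ[ℝ] ℂ

/-- `A ∈ SO(2)`: `A` is a rotation, i.e. acts as multiplication by a unit complex number. -/
def IsRotO (A : O2) : Prop := ∀ z : ℂ, A z = A 1 * z

/-- Rotation of the plane through the angle `2πa`, as an element of `O(2)`. -/
def rotO (a : ℝ) : O2 := rotation (Circle.exp (2 * Real.pi * a))

/-- The full symmetry group `Γ × Ŝ¹ = O(2) × Sₙ × Ŝ¹` acting on loops in configuration space. -/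
abbrev FullG (n : ℕ) : Type := (O2 × Equiv.Perm (Fin n)) × TimeSym

/-- The element `g = (A, σ, τ)` of `Γ × Ŝ¹` fixes the loop `u` in configuration space. -/
def Fixes {n : ℕ} (g : FullG n) (u : TimeCircle → Fin n → ℂ) : Prop :=
  ∀ (t : TimeCircle) (j : Fin n), u (g.2.act t) j = g.1.1 (u t (g.1.2⁻¹ j))

/-- The symmetry group of a loop `u`: its stabilizer in `Γ × Ŝ¹`. -/
def symmGroup (n : ℕ) (u : TimeCircle → Fin n → ℂ) : Subgroup (FullG n) where
  carrier := {g | Fixes g u}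
  one_mem' := by
    intro t j
    simp [Fixes]
  mul_mem' := by
    intro a b ha hb t j
    have h1 := ha (b.2.act t) j
    have h2 := hb t (a.1.2⁻¹ j)
    simp only [Fixes] at *
    simp only [Prod.fst_mul, Prod.snd_mul, TimeSym.act_mul]
    rw [h1, h2]
    simp [mul_inv_rev]
  inv_mem' := by
    intro a ha
    have key : ∀ (t : TimeCircle) (j : Fin n),
        a.1.1⁻¹ (u t (a.1.2 j)) = u (a.2⁻¹.act t) j := by
      intro t j
      have h := ha (a.2⁻¹.act t) (a.1.2 j)
      rw [← TimeSym.act_mul, mul_inv_cancel, TimeSym.act_one] at h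
      rw [Equiv.Perm.inv_def, Equiv.symm_apply_apply] at h
      rw [h, LinearIsometryEquiv.coe_inv, LinearIsometryEquiv.symm_apply_apply]
    intro t j
    show u ((a⁻¹).2.act t) j = (a⁻¹).1.1 (u t ((a⁻¹).1.2⁻¹ j))
    simp only [Prod.fst_inv, Prod.snd_inv, inv_inv]
    exact (key t j).symm

variable {n : ℕ}

/-- The basic cyclic permutation `σ₁ : j ↦ j + 1`. -/
def sigma1 (n : ℕ) [NeZero n] : Equiv.Perm (Fin n) := Equiv.addLeft 1

/-- The permutation `s₁ : j ↦ -j` (in `1`-indexed notation, `j ↦ 2 - j`). -/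
def sOne (n : ℕ) [NeZero n] : Equiv.Perm (Fin n) := Equiv.neg (Fin n)

/-- The choreography element `𝔠 = (I, σ₁, -1/n)`. -/
def chorEl (n : ℕ) [NeZero n] : FullG n := ((1, sigma1 n), TimeSym.trot (-(1 / n)))

/-- Projection `ρ : Γ × Ŝ¹ → O(2)`. -/
def rhoHom (n : ℕ) : FullG n →* O2 :=
  (MonoidHom.fst _ _).comp (MonoidHom.fst _ _)

/-- Projection `σ : Γ × Ŝ¹ → Sₙ`. -/
def sigHom (n : ℕ) : FullG n →* Equiv.Perm (Fin n) :=
  (MonoidHom.snd _ _).comp (MonoidHom.fst _ _)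

/-- Projection `τ : Γ × Ŝ¹ → Ŝ¹`. -/
def tauHom (n : ℕ) : FullG n →* TimeSym := MonoidHom.snd _ _
set_option linter.unusedSectionVars false
section Aux

open TimeSym

variable {n : ℕ} [NeZero n]

/-- natural numbers vanish in the time circle -/
lemma coe_nat_tc (m : ℕ) : ((m : ℝ) : TimeCircle) = 0 := by
  induction m with
  | zero => simp
  | succ k ih =>
      push_cast
      rw [QuotientAddGroup.mk_add, ih, zero_add]
      exact AddCircle.coe_period 1

/-- the fraction `m/n` in the time circle -/
def tfrac (n m : ℕ) : TimeCircle := (((m : ℝ)/(n : ℝ) : ℝ) : TimeCircle)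

lemma tfrac_zero : tfrac n 0 = 0 := by simp [tfrac]

lemma tfrac_add (a b : ℕ) : tfrac n a + tfrac n b = tfrac n (a + b) := by
  rw [tfrac, tfrac, tfrac, ← QuotientAddGroup.mk_add]
  push_cast
  ring_nf

lemma tfrac_n (hn : n ≠ 0) : tfrac n n = 0 := by
  rw [tfrac, div_self (by exact_mod_cast hn)]
  exact AddCircle.coe_period 1

lemma tfrac_mod (hn : n ≠ 0) (a : ℕ) : tfrac n a = tfrac n (a % n) := by
  conv_lhs => rw [← Nat.mod_add_div a n]
  rw [← tfrac_add]
  have : tfrac n (n * (a / n)) = 0 := by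
    rw [tfrac, Nat.cast_mul, mul_comm, mul_div_assoc,
      div_self (by exact_mod_cast hn), mul_one, coe_nat_tc]
  rw [this, add_zero]

/-- every reversing time symmetry has a fixed point -/
lemma exists_fixed (τ : TimeSym) (h : τ.rev = true) : ∃ t, τ.act t = t := by
  obtain ⟨x, hx⟩ : ∃ x : ℝ, (x : TimeCircle) = τ.shift := by
    induction τ.shift using QuotientAddGroup.induction_on with
    | H z => exact ⟨z, rfl⟩
  refine ⟨((x/2 : ℝ) : TimeCircle), ?_⟩
  rw [TimeSym.act, h, if_pos rfl, ← hx, ← QuotientAddGroup.mk_neg, ← QuotientAddGroup.mk_add]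
  congr 1
  ring

end Aux
set_option linter.unusedSectionVars false
section Aux2
variable {n : ℕ} [NeZero n]

lemma fin_val_one (hn : 3 ≤ n) : ((1 : Fin n) : ℕ) = 1 := by
  rw [Fin.val_one']; exact Nat.mod_eq_of_lt (by omega)

open Fin.NatCast in
lemma fin_val_two (hn : 3 ≤ n) : ((2 : Fin n) : ℕ) = 2 := by
  have : (2 : Fin n) = ((2 : ℕ) : Fin n) := by norm_cast
  rw [this, Fin.val_cast_of_lt (by omega)]

lemma fin_one_ne_zero (hn : 3 ≤ n) : (1 : Fin n) ≠ 0 := by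
  intro h
  have := congrArg Fin.val h
  rw [fin_val_one hn] at this
  simp at this

lemma fin_two_ne_zero (hn : 3 ≤ n) : (2 : Fin n) ≠ 0 := by
  intro h
  have := congrArg Fin.val h
  rw [fin_val_two hn] at this
  simp at this

lemma fin_two_eq (hn : 3 ≤ n) : (2 : Fin n) = 1 + 1 := by
  have : ((1 + 1 : Fin n) : ℕ) = 2 := by
    rw [Fin.val_add, fin_val_one hn, Nat.mod_eq_of_lt (by omega)]
  exact Fin.ext ((fin_val_two hn).trans this.symm)

lemma mem_symm_iff {u : TimeCircle → Fin n → ℂ} {g : FullG n} :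
    g ∈ symmGroup n u ↔ Fixes g u := Iff.rfl

lemma sigma1_inv_apply (j : Fin n) : (sigma1 n)⁻¹ j = -1 + j := rfl

end Aux2
set_option linter.unusedSectionVars false
section Aux3
variable {n : ℕ} [NeZero n] {u : TimeCircle → Fin n → ℂ}

lemma one_O2_apply (z : ℂ) : (1 : O2) z = z := rfl

lemma perm_triv (hcoll : ∀ t, Function.Injective (u t)) {g : FullG n}
    (hg : g ∈ symmGroup n u) (hA : g.1.1 = 1) (ht : ∃ t, g.2.act t = t) :
    g.1.2 = 1 := by
  obtain ⟨t, ht⟩ := ht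
  have key : ∀ j, g.1.2⁻¹ j = j := by
    intro j
    have h := hg t j
    rw [ht, hA, one_O2_apply] at h
    exact (hcoll t h).symm
  have : g.1.2⁻¹ = 1 := Equiv.ext key
  rw [← inv_inv g.1.2, this, inv_one]

lemma sigma1_ne_one (hn : 3 ≤ n) : sigma1 n ≠ 1 := by
  intro h
  have : sigma1 n 0 = 0 := by rw [h]; rfl
  have h1 : sigma1 n 0 = 1 := by simp [sigma1]
  rw [h1] at this
  exact fin_one_ne_zero hn this

lemma part1 (hn : 3 ≤ n) (hcoll : ∀ t, Function.Injective (u t))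
    (hchor : chorEl n ∈ symmGroup n u) {g : FullG n} (hg : g ∈ symmGroup n u)
    (hA : g.1.1 = 1) (hrev : g.2.rev = true) : False := by
  have hmem := (symmGroup n u).mul_mem hg hchor
  have hA' : (g * chorEl n).1.1 = 1 := by
    simp [Prod.fst_mul, chorEl, hA]
  have hrev' : (g * chorEl n).2.rev = true := by
    simp [Prod.snd_mul, chorEl, TimeSym.trot, hrev]
  have hperm : (g * chorEl n).1.2 = 1 :=
    perm_triv hcoll hmem hA' (exists_fixed _ hrev')
  have hgp : g.1.2 = 1 := perm_triv hcoll hg hA (exists_fixed _ hrev)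
  have : (g * chorEl n).1.2 = sigma1 n := by
    simp [Prod.fst_mul, chorEl, hgp]
  exact sigma1_ne_one hn (this.symm.trans hperm)

lemma circle_mul_conj (c : Circle) : (c : ℂ) * (starRingEnd ℂ) c = 1 := by
  rw [Complex.mul_conj, Circle.normSq_coe, Complex.ofReal_one]

lemma part2 (hn : 3 ≤ n) (hcoll : ∀ t, Function.Injective (u t))
    (hchor : chorEl n ∈ symmGroup n u) {g : FullG n} (hg : g ∈ symmGroup n u)
    (hs : g.1.2 = 1) (hrev : g.2.rev = true) : False := by
  set A := g.1.1 with hA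
  obtain ⟨t0, ht0⟩ := exists_fixed _ hrev
  have fix0 : ∀ j, u t0 j = A (u t0 j) := by
    intro j
    have h := hg t0 j
    rw [ht0, hs] at h
    simpa using h
  have hmem := (symmGroup n u).mul_mem hg hchor
  have hrev' : (g * chorEl n).2.rev = true := by
    simp [Prod.snd_mul, chorEl, TimeSym.trot, hrev]
  obtain ⟨t1, ht1⟩ := exists_fixed _ hrev'
  have fix1 : ∀ j, u t1 j = A (u t1 (-1 + j)) := by
    intro j
    have h := hmem t1 j
    rw [ht1] at h
    have e2 : (g * chorEl n).1.2⁻¹ j = -1 + j := by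
      rw [Prod.fst_mul]
      show (g.1.2 * (chorEl n).1.2)⁻¹ j = -1 + j
      rw [hs, one_mul]
      rfl
    have e1 : (g * chorEl n).1.1 = A := by
      simp [Prod.fst_mul, chorEl, hA]
    rw [e1, e2] at h
    exact h
  obtain ⟨c, hc | hc⟩ := linear_isometry_complex A
  · -- rotation case
    have hne : u t0 0 ≠ u t0 1 := fun h => fin_one_ne_zero hn ((hcoll t0) h).symm
    have hz : ∃ z : ℂ, z ≠ 0 ∧ z = (c : ℂ) * z := by
      rcases eq_or_ne (u t0 0) 0 with h0 | h0
      · refine ⟨u t0 1, fun h => hne (h0.trans h.symm), ?_⟩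
        have := fix0 1; rwa [hc, rotation_apply] at this
      · exact ⟨u t0 0, h0, by have := fix0 0; rwa [hc, rotation_apply] at this⟩
    obtain ⟨z, hz0, hzc⟩ := hz
    have hc1 : (c : ℂ) = 1 := by
      have := mul_right_cancel₀ hz0 (hzc.symm.trans (one_mul z).symm)
      exact this
    have : u t1 1 = u t1 0 := by
      have h := fix1 1
      rw [neg_add_cancel, hc, rotation_apply, hc1, one_mul] at h
      exact h
    exact fin_one_ne_zero hn (hcoll t1 this)
  · -- conjugation case
    have hAz : ∀ z : ℂ, A z = (c : ℂ) * (starRingEnd ℂ) z := by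
      intro z; rw [hc]; rfl
    have hAA : ∀ z : ℂ, A (A z) = z := by
      intro z
      rw [hAz, hAz]
      rw [map_mul, Complex.conj_conj]
      rw [← mul_assoc, circle_mul_conj, one_mul]
    have h2 : u t1 2 = u t1 0 := by
      have e1 := fix1 1
      rw [neg_add_cancel] at e1
      have e2 := fix1 2
      rw [fin_two_eq hn, ← add_assoc, neg_add_cancel, zero_add] at e2
      rw [fin_two_eq hn, e2, e1, hAA]
    exact fin_two_ne_zero hn (hcoll t1 h2)

end Aux3
section Aux4
set_option linter.unusedSectionVars false
variable {n : ℕ} [NeZero n] {u : TimeCircle → Fin n → ℂ}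

/-- square root on the circle: a unit vector fixed by `z ↦ c * conj z` -/
lemma exists_fixed_vec (c : Circle) :
    ∃ w : ℂ, w ≠ 0 ∧ w * (starRingEnd ℂ) w = 1 ∧ (c : ℂ) = w ^ 2 := by
  obtain ⟨w, hw⟩ := IsAlgClosed.exists_pow_nat_eq (c : ℂ) (n := 2) two_pos
  have hns : Complex.normSq w = 1 := by
    have h2 : Complex.normSq w ^ 2 = 1 := by
      rw [← map_pow, hw, Circle.normSq_coe]
    have h0 : 0 ≤ Complex.normSq w := Complex.normSq_nonneg w
    nlinarith
  have hw0 : w ≠ 0 := by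
    intro h; rw [h, map_zero] at hns; norm_num at hns
  refine ⟨w, hw0, ?_, hw.symm⟩
  rw [Complex.mul_conj, hns, Complex.ofReal_one]

lemma chor_step (hchor : chorEl n ∈ symmGroup n u) :
    ∀ (t : TimeCircle) (j : Fin n), u t (1 + j) = u (t + tfrac n 1) j := by
  intro t j
  have h := hchor (t + tfrac n 1) (1 + j)
  have hact : (chorEl n).2.act (t + tfrac n 1) = t := by
    show ((-(1/(n:ℝ)) : ℝ) : TimeCircle) + (t + tfrac n 1) = t
    have : ((-(1/(n:ℝ)) : ℝ) : TimeCircle) + tfrac n 1 = 0 := by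
      rw [tfrac, ← QuotientAddGroup.mk_add]
      norm_num
    rw [add_comm t, ← add_assoc, this, zero_add]
  have hperm : (chorEl n).1.2⁻¹ (1 + j) = j := by
    show (sigma1 n)⁻¹ (1 + j) = j
    rw [sigma1_inv_apply, ← add_assoc, neg_add_cancel, zero_add]
  rw [hact, hperm] at h
  exact h

open Fin.NatCast in
lemma transport (hchor : chorEl n ∈ symmGroup n u) :
    ∀ (m : ℕ) (t : TimeCircle), u t ((m : ℕ) : Fin n) = u (t + tfrac n m) 0 := by
  intro m
  induction m with
  | zero => intro t; simp [tfrac_zero]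
  | succ k ih =>
      intro t
      have hcast : ((k+1 : ℕ) : Fin n) = 1 + ((k : ℕ) : Fin n) := by
        apply Fin.ext; simp only [Fin.val_natCast, Fin.val_add, Fin.val_one']; rw [Nat.add_mod, add_comm]
      rw [hcast, chor_step hchor, ih, add_assoc, tfrac_add]
      norm_num [add_comm]

open Fin.NatCast in
lemma hdist (hn : 3 ≤ n) (hcoll : ∀ t, Function.Injective (u t))
    (hchor : chorEl n ∈ symmGroup n u) :
    ∀ (t : TimeCircle) (a b : ℕ), a < n → b < n → a ≠ b →
      u (t + tfrac n a) 0 ≠ u (t + tfrac n b) 0 := by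
  intro t a b ha hb hab h
  rw [← transport hchor, ← transport hchor] at h
  have := hcoll t h
  have : a = b := by
    have := congrArg Fin.val this
    rwa [Fin.val_cast_of_lt ha, Fin.val_cast_of_lt hb] at this
  exact hab this

end Aux4
section Aux5
set_option linter.unusedSectionVars false
set_option maxHeartbeats 1000000
variable {n : ℕ} [NeZero n] {u : TimeCircle → Fin n → ℂ}

/-- sign coherence for a nonvanishing continuous function on the circle -/
lemma sign_coherent {f : TimeCircle → ℝ} (hf : Continuous f) (hne : ∀ t, f t ≠ 0) :
    (∀ t, 0 < f t) ∨ (∀ t, f t < 0) := by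
  rcases (hne 0).lt_or_gt with h0 | h0
  · right
    intro t
    by_contra h
    push_neg at h
    have ht : 0 < f t := lt_of_le_of_ne h (Ne.symm (hne t))
    obtain ⟨s, hs⟩ := intermediate_value_univ 0 t hf ⟨le_of_lt h0, le_of_lt ht⟩
    exact hne s hs
  · left
    intro t
    by_contra h
    push_neg at h
    have ht : f t < 0 := lt_of_le_of_ne h (hne t)
    obtain ⟨s, hs⟩ := intermediate_value_univ t 0 hf ⟨le_of_lt ht, le_of_lt h0⟩
    exact hne s hs

open Fin.NatCast in
lemma part3 (hn : 3 ≤ n) (hu : Continuous u) (hcoll : ∀ t, Function.Injective (u t))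
    (hchor : chorEl n ∈ symmGroup n u) {g : FullG n} (hg : g ∈ symmGroup n u)
    (ht : g.2 = 1) : IsRotO g.1.1 := by
  set A := g.1.1 with hA
  obtain ⟨c, hc | hc⟩ := linear_isometry_complex A
  · intro z
    rw [hc, rotation_apply, rotation_apply, mul_one]
  -- conjugation case : derive a contradiction
  exfalso
  have hAz : ∀ z : ℂ, A z = (c : ℂ) * (starRingEnd ℂ) z := fun z => by rw [hc]; rfl
  -- the key relation
  set σ := g.1.2 with hσ
  set kv : ℕ := (σ 0).val with hkv
  have hkvlt : kv < n := (σ 0).isLt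
  have hrel : ∀ t, u (t + tfrac n kv) 0 = A (u t 0) := by
    intro t
    have h := hg t (σ 0)
    rw [ht, TimeSym.act_one, Equiv.Perm.inv_def, Equiv.symm_apply_apply] at h
    rw [← h, ← transport hchor kv t]
    congr 1
    exact (Fin.cast_val_eq_self (σ 0)).symm ▸ rfl
  -- u is continuous in time at body 0
  have hu0 : Continuous (fun t => u t 0) := (continuous_apply (0 : Fin n)).comp hu
  -- obtain the fixed unit vector w
  obtain ⟨w, hw0, hwc, hcw⟩ := exists_fixed_vec c
  have hwconj0 : (starRingEnd ℂ) w ≠ 0 := by simpa using hw0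
  -- double application gives the identity
  have hAA : ∀ z : ℂ, A (A z) = z := by
    intro z
    rw [hAz, hAz, map_mul, Complex.conj_conj, ← mul_assoc, Complex.mul_conj,
      Circle.normSq_coe, Complex.ofReal_one, one_mul]
  have hrel2 : ∀ t, u (t + tfrac n ((kv + kv) % n)) 0 = u t 0 := by
    intro t
    rw [← tfrac_mod (NeZero.ne n), ← tfrac_add, ← add_assoc, hrel, hrel, hAA]
  -- 2 kv ≡ 0 mod n
  have hr0 : (kv + kv) % n = 0 := by
    by_contra hr
    have h2 := hrel2 0
    have := hdist hn hcoll hchor 0 ((kv + kv) % n) 0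
      (Nat.mod_lt _ (Nat.pos_of_ne_zero (NeZero.ne n))) (by omega) hr
    rw [tfrac_zero, add_zero] at this
    exact this h2
  have hcases : kv = 0 ∨ kv + kv = n := by
    have := Nat.dvd_of_mod_eq_zero hr0
    rcases this with ⟨q, hq⟩
    rcases Nat.lt_or_ge q 2 with hq2 | hq2
    · interval_cases q <;> omega
    · have := Nat.mul_le_mul_left n hq2
      omega
  rcases hcases with hk0 | hkn
  · -- collinear case : kv = 0
    have hfixeq : ∀ t, u t 0 = A (u t 0) := by
      intro t
      have h := hrel t
      rwa [hk0, tfrac_zero, add_zero] at h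
    have hreal : ∀ t, ((u t 0) * (starRingEnd ℂ) w).im = 0 := by
      intro t
      apply Complex.conj_eq_iff_im.mp
      set z := u t 0 with hzdef
      have hz : z = (c : ℂ) * (starRingEnd ℂ) z := by
        rw [← hAz]; exact hfixeq t
      have key : z * (starRingEnd ℂ) w = (starRingEnd ℂ) z * w := by
        conv_lhs => rw [hz, hcw]
        calc w ^ 2 * (starRingEnd ℂ) z * (starRingEnd ℂ) w
            = (starRingEnd ℂ) z * w * (w * (starRingEnd ℂ) w) := by ring
          _ = (starRingEnd ℂ) z * w := by rw [hwc, mul_one]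
      rw [map_mul, Complex.conj_conj, key]
    set F : TimeCircle → ℝ := fun t => ((u t 0) * (starRingEnd ℂ) w).re with hF
    have hFval : ∀ t, (u t 0) * (starRingEnd ℂ) w = ((F t : ℝ) : ℂ) := by
      intro t
      apply Complex.ext
      · simp [hF]
      · simp [hreal t]
    have hFcont : Continuous F := Complex.continuous_re.comp (hu0.mul continuous_const)
    set G : TimeCircle → ℝ := fun t => F (t + tfrac n 1) - F t with hG
    have hGcont : Continuous G := (hFcont.comp (continuous_add_right _)).sub hFcont
    have hGne : ∀ t, G t ≠ 0 := by
      intro t h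
      have h1 : F (t + tfrac n 1) = F t := by
        have : G t = F (t + tfrac n 1) - F t := rfl
        rw [this] at h
        linarith [h]
      have h2 : u (t + tfrac n 1) 0 * (starRingEnd ℂ) w = u t 0 * (starRingEnd ℂ) w := by
        rw [hFval, hFval, h1]
      have h3 : u (t + tfrac n 1) 0 = u (t + tfrac n 0) 0 := by
        rw [tfrac_zero, add_zero]
        exact mul_right_cancel₀ hwconj0 h2
      exact hdist hn hcoll hchor t 1 0 (by omega) (by omega) one_ne_zero h3
    have htel : ∑ m ∈ Finset.range n, G (tfrac n m) = 0 := by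
      have heq : ∀ m ∈ Finset.range n, G (tfrac n m) = F (tfrac n (m+1)) - F (tfrac n m) := by
        intro m _
        show F (tfrac n m + tfrac n 1) - F (tfrac n m) = _
        rw [tfrac_add]
      rw [Finset.sum_congr rfl heq, Finset.sum_range_sub (fun m => F (tfrac n m)) n,
        tfrac_n (NeZero.ne n), tfrac_zero, sub_self]
    have hnonempty : (Finset.range n).Nonempty := ⟨0, Finset.mem_range.mpr (by omega)⟩
    rcases sign_coherent hGcont hGne with hp | hneg
    · have : (0:ℝ) < ∑ m ∈ Finset.range n, G (tfrac n m) :=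
        Finset.sum_pos (fun i _ => hp _) hnonempty
      rw [htel] at this
      exact lt_irrefl 0 this
    · have : ∑ m ∈ Finset.range n, G (tfrac n m) < 0 :=
        Finset.sum_neg (fun i _ => hneg _) hnonempty
      rw [htel] at this
      exact lt_irrefl 0 this
  · -- antisymmetric case : 2 kv = n
    have hkvne : kv ≠ 0 := by omega
    set κ := tfrac n kv with hκ
    have hrelw : ∀ t, u (t + κ) 0 * (starRingEnd ℂ) w
        = (starRingEnd ℂ) ((u t 0) * (starRingEnd ℂ) w) := by
      intro t
      rw [map_mul, Complex.conj_conj, hrel, hAz, hcw]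
      calc w ^ 2 * (starRingEnd ℂ) (u t 0) * (starRingEnd ℂ) w
          = (starRingEnd ℂ) (u t 0) * w * (w * (starRingEnd ℂ) w) := by ring
        _ = (starRingEnd ℂ) (u t 0) * w := by rw [hwc, mul_one]
    set H : TimeCircle → ℝ := fun t => ((u t 0) * (starRingEnd ℂ) w).im with hH
    have hHcont : Continuous H := Complex.continuous_im.comp (hu0.mul continuous_const)
    have hHflip : ∀ t, H (t + κ) = - H t := by
      intro t
      show ((u (t + κ) 0) * (starRingEnd ℂ) w).im = _
      rw [hrelw]
      simp [hH]
      ring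
    have hHne : ∀ t, H t ≠ 0 := by
      intro t h
      have hdiff : u (t + κ) 0 ≠ u (t + tfrac n 0) 0 :=
        hdist hn hcoll hchor t kv 0 hkvlt (by omega) hkvne
      rw [tfrac_zero, add_zero] at hdiff
      have hzz : (starRingEnd ℂ) ((u t 0) * (starRingEnd ℂ) w) = (u t 0) * (starRingEnd ℂ) w := by
        apply Complex.conj_eq_iff_im.mpr
        exact h
      have := hrelw t
      rw [hzz] at this
      exact hdiff (mul_right_cancel₀ hwconj0 this)
    rcases sign_coherent hHcont hHne with hp | hneg
    · have h1 := hp (0 + κ)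
      have h2 := hp 0
      rw [hHflip 0] at h1
      linarith
    · have h1 := hneg (0 + κ)
      have h2 := hneg 0
      rw [hHflip 0] at h1
      linarith

end Aux5
section Aux6
set_option linter.unusedSectionVars false
variable {n : ℕ} [NeZero n] {u : TimeCircle → Fin n → ℂ}

lemma triv_elem (hcoll : ∀ t, Function.Injective (u t)) {k : FullG n}
    (hk : k ∈ symmGroup n u) (hA : k.1.1 = 1) (ht : k.2 = 1) : k = 1 := by
  have hp : k.1.2 = 1 := perm_triv hcoll hk hA ⟨0, by rw [ht]; exact TimeSym.act_one 0⟩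
  exact Prod.ext (Prod.ext hA hp) ht

lemma part4 (hcoll : ∀ t, Function.Injective (u t)) {g h : FullG n}
    (hg : g ∈ symmGroup n u) (hh : h ∈ symmGroup n u)
    (hA : g.1.1 = 1) (hA' : h.1.1 = 1) (ht : g.2 = h.2) : g = h := by
  have hk := (symmGroup n u).mul_mem hg ((symmGroup n u).inv_mem hh)
  have h1 : (g * h⁻¹).1.1 = 1 := by
    simp [Prod.fst_mul, Prod.fst_inv, hA, hA']
  have h2 : (g * h⁻¹).2 = 1 := by
    simp [Prod.snd_mul, Prod.snd_inv, ht]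
  exact mul_inv_eq_one.mp (triv_elem hcoll hk h1 h2)

lemma part5 (hn : 3 ≤ n) (hu : Continuous u) (hcoll : ∀ t, Function.Injective (u t))
    (hchor : chorEl n ∈ symmGroup n u) {g h : FullG n}
    (hg : g ∈ symmGroup n u) (hh : h ∈ symmGroup n u)
    (hs : g.1.2 = 1) (hs' : h.1.2 = 1) (ht : g.2 = h.2) : g = h := by
  have hk := (symmGroup n u).mul_mem hg ((symmGroup n u).inv_mem hh)
  set k := g * h⁻¹ with hkdef
  have h2 : k.2 = 1 := by simp [hkdef, Prod.snd_mul, Prod.snd_inv, ht]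
  have hksig : k.1.2 = 1 := by simp [hkdef, Prod.fst_mul, Prod.fst_inv, hs, hs']
  have hrot : IsRotO k.1.1 := part3 hn hu hcoll hchor hk h2
  set A := k.1.1 with hAdef
  have hfix : ∀ j, u 0 j = A (u 0 j) := by
    intro j
    have hx := hk 0 j
    rw [h2, TimeSym.act_one, hksig] at hx
    simpa using hx
  have hne : u 0 0 ≠ u 0 1 := fun hq => fin_one_ne_zero hn ((hcoll 0) hq).symm
  have hA1 : A 1 = 1 := by
    rcases eq_or_ne (u 0 0) 0 with h0 | h0
    · have hz0 : u 0 1 ≠ 0 := fun hq => hne (h0.trans hq.symm)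
      have hx : A 1 * u 0 1 = u 0 1 := (hrot _).symm.trans (hfix 1).symm
      exact mul_right_cancel₀ hz0 (hx.trans (one_mul _).symm)
    · have hx : A 1 * u 0 0 = u 0 0 := (hrot _).symm.trans (hfix 0).symm
      exact mul_right_cancel₀ h0 (hx.trans (one_mul _).symm)
  have hAone : A = 1 := by
    apply LinearIsometryEquiv.ext
    intro z
    rw [hrot z, hA1, one_mul]
    rfl
  exact mul_inv_eq_one.mp (triv_elem hcoll hk hAone h2)

lemma part6 (hcoll : ∀ t, Function.Injective (u t)) {g h : FullG n}
    (hg : g ∈ symmGroup n u) (hh : h ∈ symmGroup n u)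
    (ht : g.2 = 1) (ht' : h.2 = 1) (hA : g.1.1 = h.1.1) : g = h := by
  have hk := (symmGroup n u).mul_mem hg ((symmGroup n u).inv_mem hh)
  have h1 : (g * h⁻¹).1.1 = 1 := by
    simp [Prod.fst_mul, Prod.fst_inv, hA]
  have h2 : (g * h⁻¹).2 = 1 := by
    simp [Prod.snd_mul, Prod.snd_inv, ht, ht']
  exact mul_inv_eq_one.mp (triv_elem hcoll hk h1 h2)

end Aux6
section Aux7
set_option linter.unusedSectionVars false
variable {n : ℕ} [NeZero n] {u : TimeCircle → Fin n → ℂ}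

lemma rev_false_of_part1 (hn : 3 ≤ n) (hcoll : ∀ t, Function.Injective (u t))
    (hchor : chorEl n ∈ symmGroup n u) {g : FullG n} (hg : g ∈ symmGroup n u)
    (hA : g.1.1 = 1) : g.2.rev = false := by
  cases hrev : g.2.rev with
  | false => rfl
  | true => exact absurd (part1 hn hcoll hchor hg hA hrev) id

lemma rev_false_of_part2 (hn : 3 ≤ n) (hcoll : ∀ t, Function.Injective (u t))
    (hchor : chorEl n ∈ symmGroup n u) {g : FullG n} (hg : g ∈ symmGroup n u)
    (hs : g.1.2 = 1) : g.2.rev = false := by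
  cases hrev : g.2.rev with
  | false => rfl
  | true => exact absurd (part2 hn hcoll hchor hg hs hrev) id

lemma cyclic_ker_rho (hn : 3 ≤ n) (hcoll : ∀ t, Function.Injective (u t))
    (hchor : chorEl n ∈ symmGroup n u) (hfin : Finite ↥(symmGroup n u)) :
    IsCyclic ↥(symmGroup n u ⊓ (rhoHom n).ker) := by
  let K := symmGroup n u ⊓ (rhoHom n).ker
  show IsCyclic ↥K
  haveI : Finite ↥K :=
    Finite.of_injective (Subgroup.inclusion (inf_le_left : K ≤ symmGroup n u))
      (Subgroup.inclusion_injective _)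
  have hmem : ∀ x : ↥K, x.1 ∈ symmGroup n u ∧ x.1.1.1 = 1 := by
    intro x
    obtain ⟨h1, h2⟩ := Subgroup.mem_inf.mp x.2
    exact ⟨h1, h2⟩
  have hrev : ∀ x : ↥K, x.1.2.rev = false := fun x =>
    rev_false_of_part1 hn hcoll hchor (hmem x).1 (hmem x).2
  let φ : ↥K →* ℂ :=
  { toFun := fun x => ((AddCircle.toCircle (T := (1:ℝ)) x.1.2.shift : Circle) : ℂ)
    map_one' := by
      show ((AddCircle.toCircle (T := (1:ℝ)) ((1 : ↥K) : FullG n).2.shift : Circle) : ℂ) = 1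
      have h0 : ((1 : ↥K) : FullG n).2.shift = 0 := rfl
      rw [h0, AddCircle.toCircle_zero, Circle.coe_one]
    map_mul' := by
      intro x y
      show ((AddCircle.toCircle (T := (1:ℝ)) ((x * y : ↥K) : FullG n).2.shift : Circle) : ℂ)
        = ((AddCircle.toCircle (T := (1:ℝ)) x.1.2.shift : Circle) : ℂ)
          * ((AddCircle.toCircle (T := (1:ℝ)) y.1.2.shift : Circle) : ℂ)
      have hsh : ((x * y : ↥K) : FullG n).2.shift = x.1.2.shift + y.1.2.shift := by
        have hxy : ((x * y : ↥K) : FullG n).2 = x.1.2 * y.1.2 := rfl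
        rw [hxy, TimeSym.mul_shift, hrev x]
        simp
      rw [hsh, AddCircle.toCircle_add, Circle.coe_mul] }
  have hinj : Function.Injective φ := by
    intro x y hxy
    have h1 : AddCircle.toCircle (T := (1:ℝ)) x.1.2.shift
        = AddCircle.toCircle (T := (1:ℝ)) y.1.2.shift := Circle.coe_injective hxy
    have hsh : x.1.2.shift = y.1.2.shift := AddCircle.injective_toCircle one_ne_zero h1
    have htau : x.1.2 = y.1.2 := TimeSym.ext hsh ((hrev x).trans (hrev y).symm)
    exact Subtype.ext (part4 hcoll (hmem x).1 (hmem y).1 (hmem x).2 (hmem y).2 htau)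
  exact isCyclic_of_subgroup_isDomain φ hinj

lemma cyclic_ker_sig (hn : 3 ≤ n) (hu : Continuous u)
    (hcoll : ∀ t, Function.Injective (u t))
    (hchor : chorEl n ∈ symmGroup n u) (hfin : Finite ↥(symmGroup n u)) :
    IsCyclic ↥(symmGroup n u ⊓ (sigHom n).ker) := by
  let K := symmGroup n u ⊓ (sigHom n).ker
  show IsCyclic ↥K
  haveI : Finite ↥K :=
    Finite.of_injective (Subgroup.inclusion (inf_le_left : K ≤ symmGroup n u))
      (Subgroup.inclusion_injective _)
  have hmem : ∀ x : ↥K, x.1 ∈ symmGroup n u ∧ x.1.1.2 = 1 := by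
    intro x
    obtain ⟨h1, h2⟩ := Subgroup.mem_inf.mp x.2
    exact ⟨h1, h2⟩
  have hrev : ∀ x : ↥K, x.1.2.rev = false := fun x =>
    rev_false_of_part2 hn hcoll hchor (hmem x).1 (hmem x).2
  let φ : ↥K →* ℂ :=
  { toFun := fun x => ((AddCircle.toCircle (T := (1:ℝ)) x.1.2.shift : Circle) : ℂ)
    map_one' := by
      show ((AddCircle.toCircle (T := (1:ℝ)) ((1 : ↥K) : FullG n).2.shift : Circle) : ℂ) = 1
      have h0 : ((1 : ↥K) : FullG n).2.shift = 0 := rfl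
      rw [h0, AddCircle.toCircle_zero, Circle.coe_one]
    map_mul' := by
      intro x y
      show ((AddCircle.toCircle (T := (1:ℝ)) ((x * y : ↥K) : FullG n).2.shift : Circle) : ℂ)
        = ((AddCircle.toCircle (T := (1:ℝ)) x.1.2.shift : Circle) : ℂ)
          * ((AddCircle.toCircle (T := (1:ℝ)) y.1.2.shift : Circle) : ℂ)
      have hsh : ((x * y : ↥K) : FullG n).2.shift = x.1.2.shift + y.1.2.shift := by
        have hxy : ((x * y : ↥K) : FullG n).2 = x.1.2 * y.1.2 := rfl
        rw [hxy, TimeSym.mul_shift, hrev x]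
        simp
      rw [hsh, AddCircle.toCircle_add, Circle.coe_mul] }
  have hinj : Function.Injective φ := by
    intro x y hxy
    have h1 : AddCircle.toCircle (T := (1:ℝ)) x.1.2.shift
        = AddCircle.toCircle (T := (1:ℝ)) y.1.2.shift := Circle.coe_injective hxy
    have hsh : x.1.2.shift = y.1.2.shift := AddCircle.injective_toCircle one_ne_zero h1
    have htau : x.1.2 = y.1.2 := TimeSym.ext hsh ((hrev x).trans (hrev y).symm)
    exact Subtype.ext
      (part5 hn hu hcoll hchor (hmem x).1 (hmem y).1 (hmem x).2 (hmem y).2 htau)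
  exact isCyclic_of_subgroup_isDomain φ hinj

lemma cyclic_ker_tau (hn : 3 ≤ n) (hu : Continuous u)
    (hcoll : ∀ t, Function.Injective (u t))
    (hchor : chorEl n ∈ symmGroup n u) (hfin : Finite ↥(symmGroup n u)) :
    IsCyclic ↥(symmGroup n u ⊓ (tauHom n).ker) := by
  let K := symmGroup n u ⊓ (tauHom n).ker
  show IsCyclic ↥K
  haveI : Finite ↥K :=
    Finite.of_injective (Subgroup.inclusion (inf_le_left : K ≤ symmGroup n u))
      (Subgroup.inclusion_injective _)
  have hmem : ∀ x : ↥K, x.1 ∈ symmGroup n u ∧ x.1.2 = 1 := by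
    intro x
    obtain ⟨h1, h2⟩ := Subgroup.mem_inf.mp x.2
    exact ⟨h1, h2⟩
  have hrot : ∀ x : ↥K, IsRotO x.1.1.1 := fun x =>
    part3 hn hu hcoll hchor (hmem x).1 (hmem x).2
  let φ : ↥K →* ℂ :=
  { toFun := fun x => x.1.1.1 1
    map_one' := rfl
    map_mul' := by
      intro x y
      have h1 : ((x * y : ↥K) : FullG n).1.1 = x.1.1.1 * y.1.1.1 := rfl
      have h2 : (x.1.1.1 * y.1.1.1) 1 = x.1.1.1 (y.1.1.1 1) := rfl
      show ((x * y : ↥K) : FullG n).1.1 1 = x.1.1.1 1 * y.1.1.1 1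
      rw [h1, h2, hrot x (y.1.1.1 1)]
    }
  have hinj : Function.Injective φ := by
    intro x y hxy
    have hAeq : x.1.1.1 = y.1.1.1 := by
      apply LinearIsometryEquiv.ext
      intro z
      rw [hrot x z, hrot y z]
      show φ x * z = φ y * z
      rw [hxy]
    exact Subtype.ext
      (part6 hcoll (hmem x).1 (hmem y).1 (hmem x).2 (hmem y).2 hAeq)
  exact isCyclic_of_subgroup_isDomain φ hinj

end Aux7


/-- For a choreography `u` with symmetry group `G = symmGroup n u`:
every element of `ker ρ` and of `ker σ` has non-time-reversing `τ`-component, every element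
of `ker τ` has `ρ`-component in `SO(2)`; consequently `τ` is injective on `ker ρ` and on
`ker σ`, `ρ` is injective on `ker τ`, and when `G` is finite these three kernels are cyclic. -/
theorem statement_1 (n : ℕ) (hn : 3 ≤ n) [NeZero n]
    (u : TimeCircle → Fin n → ℂ) (hu : Continuous u)
    (hsum : ∀ t, ∑ j, u t j = 0)
    (hcoll : ∀ t, Function.Injective (u t))
    (hchor : chorEl n ∈ symmGroup n u) :
    (∀ g ∈ symmGroup n u, g.1.1 = 1 → g.2.rev = false) ∧
    (∀ g ∈ symmGroup n u, g.1.2 = 1 → g.2.rev = false) ∧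
    (∀ g ∈ symmGroup n u, g.2 = 1 → IsRotO g.1.1) ∧
    (∀ g ∈ symmGroup n u, ∀ h ∈ symmGroup n u,
      g.1.1 = 1 → h.1.1 = 1 → g.2 = h.2 → g = h) ∧
    (∀ g ∈ symmGroup n u, ∀ h ∈ symmGroup n u,
      g.1.2 = 1 → h.1.2 = 1 → g.2 = h.2 → g = h) ∧
    (∀ g ∈ symmGroup n u, ∀ h ∈ symmGroup n u,
      g.2 = 1 → h.2 = 1 → g.1.1 = h.1.1 → g = h) ∧
    (Finite ↥(symmGroup n u) →
      IsCyclic ↥(symmGroup n u ⊓ (rhoHom n).ker) ∧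
      IsCyclic ↥(symmGroup n u ⊓ (sigHom n).ker) ∧
      IsCyclic ↥(symmGroup n u ⊓ (tauHom n).ker)) := by
  exact ⟨fun g hg hA => rev_false_of_part1 hn hcoll hchor hg hA,
    fun g hg hs => rev_false_of_part2 hn hcoll hchor hg hs,
    fun g hg ht => part3 hn hu hcoll hchor hg ht,
    fun g hg h hh hA hA' ht => part4 hcoll hg hh hA hA' ht,
    fun g hg h hh hs hs' ht => part5 hn hu hcoll hchor hg hh hs hs' ht,
    fun g hg h hh ht ht' hA => part6 hcoll hg hh ht ht' hA,
    fun hfin => ⟨cyclic_ker_rho hn hcoll hchor hfin,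
      cyclic_ker_sig hn hu hcoll hchor hfin,
      cyclic_ker_tau hn hu hcoll hchor hfin⟩⟩

end
end

section
/- Let n ≥ 3 and let u be a choreography in X⁽ⁿ⁾ with symmetry group G ≤ Γ × Ŝ¹. Then ℭₙ is a normal subgroup of G: every α ∈ G satisfies α 𝔠 α⁻¹ ∈ {𝔠, 𝔠⁻¹}. Moreover σ(G) ⊆ Σₙ⁺, the dihedral subgroup of Sₙ generated by σ₁ and s₁. -/
noncomputable section

open Complex

variable {n : ℕ}

open Fin.CommRing
lemma sigma1_pow (n : ℕ) [NeZero n] (k : ℕ) :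
    (sigma1 n) ^ k = Equiv.addLeft ((k : Fin n)) := by
  induction k with
  | zero => ext j; simp [sigma1]
  | succ k ih =>
    rw [pow_succ, ih]
    refine Equiv.ext fun j => ?_
    rw [Equiv.Perm.mul_apply]
    show (k : Fin n) + (1 + j) = ((k + 1 : ℕ) : Fin n) + j
    push_cast
    ring

lemma sOne_sq (n : ℕ) [NeZero n] : sOne n * sOne n = 1 := by
  ext j; simp [sOne]

lemma sOne_conj (n : ℕ) [NeZero n] :
    sOne n * sigma1 n * sOne n = (sigma1 n)⁻¹ := by
  refine eq_inv_of_mul_eq_one_left ?_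
  ext j
  simp only [Equiv.Perm.mul_apply, sOne, sigma1, Equiv.neg_apply, Equiv.coe_addLeft,
    Equiv.Perm.one_apply]
  ring

lemma mem_closure_of_comm (n : ℕ) [NeZero n] (π : Equiv.Perm (Fin n))
    (h : π * sigma1 n = sigma1 n * π) :
    π ∈ Subgroup.closure {sigma1 n, sOne n} := by
  have hstep : ∀ j : Fin n, π (1 + j) = 1 + π j := by
    intro j
    have := Equiv.ext_iff.mp h j
    simpa [sigma1] using this
  have hnat : ∀ k : ℕ, π ((k : Fin n)) = (k : Fin n) + π 0 := by
    intro k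
    induction k with
    | zero => simp
    | succ k ih =>
      have : ((k + 1 : ℕ) : Fin n) = 1 + (k : Fin n) := by push_cast; ring
      rw [this, hstep, ih]; ring
  have hπ : π = Equiv.addLeft (π 0) := by
    ext j
    rw [Equiv.coe_addLeft]
    conv_lhs => rw [← Fin.cast_val_eq_self j]
    rw [hnat, Fin.cast_val_eq_self]
    ring
  rw [hπ, ← Fin.cast_val_eq_self (π 0), ← sigma1_pow]
  exact pow_mem (Subgroup.subset_closure (Set.mem_insert _ _)) _

lemma mem_closure_of_conj_inv (n : ℕ) [NeZero n] (π : Equiv.Perm (Fin n))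
    (h : π * sigma1 n * π⁻¹ = (sigma1 n)⁻¹) :
    π ∈ Subgroup.closure {sigma1 n, sOne n} := by
  have h1 : π * (sigma1 n)⁻¹ = sigma1 n * π := by
    have h' : π * (sigma1 n)⁻¹ * π⁻¹ = sigma1 n := by
      have := congrArg (·⁻¹) h
      simpa [mul_inv_rev, mul_assoc] using this
    rw [mul_inv_eq_iff_eq_mul] at h'
    rw [h']
  have h2 : sOne n * sigma1 n = (sigma1 n)⁻¹ * sOne n := by
    have := congrArg (· * sOne n) (sOne_conj n)
    simpa [mul_assoc, sOne_sq n] using this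
  have hcomm : (π * sOne n) * sigma1 n = sigma1 n * (π * sOne n) := by
    calc (π * sOne n) * sigma1 n = π * (sOne n * sigma1 n) := by rw [mul_assoc]
      _ = π * ((sigma1 n)⁻¹ * sOne n) := by rw [h2]
      _ = (π * (sigma1 n)⁻¹) * sOne n := by rw [mul_assoc]
      _ = (sigma1 n * π) * sOne n := by rw [h1]
      _ = sigma1 n * (π * sOne n) := by rw [mul_assoc]
  have hmem := mem_closure_of_comm n (π * sOne n) hcomm
  have hπ : π = (π * sOne n) * sOne n := by rw [mul_assoc, sOne_sq n, mul_one]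
  rw [hπ]
  exact mul_mem hmem (Subgroup.subset_closure (Set.mem_insert_of_mem _ rfl))

lemma fixes_eq {n : ℕ} [NeZero n] {u : TimeCircle → Fin n → ℂ}
    (hcoll : ∀ t, Function.Injective (u t))
    {β γ : FullG n} (hβ : Fixes β u) (hγ : Fixes γ u)
    (h1 : β.1.1 = γ.1.1) (h2 : β.2 = γ.2) : β = γ := by
  have hp : β.1.2⁻¹ = γ.1.2⁻¹ := by
    refine Equiv.ext fun j => ?_
    have e1 := hβ 0 j
    have e2 := hγ 0 j
    rw [h1, h2] at e1
    have := e1.symm.trans e2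
    exact hcoll 0 (γ.1.1.injective this)
  have hperm : β.1.2 = γ.1.2 := inv_injective hp
  exact Prod.ext (Prod.ext h1 hperm) h2

/-- The choreography group `ℭₙ = ⟨𝔠⟩` is a normal subgroup of the symmetry
group `G` of any choreography: every `α ∈ G` satisfies `α 𝔠 α⁻¹ ∈ {𝔠, 𝔠⁻¹}`; moreover
`σ(G) ⊆ Σₙ⁺ = ⟨σ₁, s₁⟩`. -/
theorem statement_3 (n : ℕ) (hn : 3 ≤ n) [NeZero n]
    (u : TimeCircle → Fin n → ℂ) (hu : Continuous u)
    (hsum : ∀ t, ∑ j, u t j = 0)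
    (hcoll : ∀ t, Function.Injective (u t))
    (hchor : chorEl n ∈ symmGroup n u) :
    (∀ α ∈ symmGroup n u,
      α * chorEl n * α⁻¹ = chorEl n ∨ α * chorEl n * α⁻¹ = (chorEl n)⁻¹) ∧
    ((Subgroup.zpowers (chorEl n)).subgroupOf (symmGroup n u)).Normal ∧
    (∀ α ∈ symmGroup n u, α.1.2 ∈ Subgroup.closure {sigma1 n, sOne n}) := by
  have hC : Fixes (chorEl n) u := hchor
  have hCinv : Fixes (chorEl n)⁻¹ u := inv_mem hchor
  have key : ∀ α ∈ symmGroup n u,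
      α * chorEl n * α⁻¹ = chorEl n ∨ α * chorEl n * α⁻¹ = (chorEl n)⁻¹ := by
    intro α hα
    have hβmem : α * chorEl n * α⁻¹ ∈ symmGroup n u :=
      mul_mem (mul_mem hα hchor) (inv_mem hα)
    have hβ : Fixes (α * chorEl n * α⁻¹) u := hβmem
    have h11 : (α * chorEl n * α⁻¹).1.1 = 1 := by
      simp [chorEl, Prod.fst_mul, Prod.fst_inv]
    cases hr : α.2.rev with
    | false =>
      left
      have h2 : (α * chorEl n * α⁻¹).2 = (chorEl n).2 := by
        ext
        · simp [chorEl, TimeSym.trot, Prod.snd_mul, Prod.snd_inv, hr]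
        · simp [chorEl, TimeSym.trot, Prod.snd_mul, Prod.snd_inv, hr]
      exact fixes_eq hcoll hβ hC h11 h2
    | true =>
      right
      have h2 : (α * chorEl n * α⁻¹).2 = (chorEl n)⁻¹.2 := by
        ext
        · simp [chorEl, TimeSym.trot, Prod.snd_mul, Prod.snd_inv, hr]
        · simp [chorEl, TimeSym.trot, Prod.snd_mul, Prod.snd_inv, hr]
      have h11' : (chorEl n)⁻¹.1.1 = 1 := by simp [chorEl, Prod.fst_inv]
      exact fixes_eq hcoll hβ hCinv (h11.trans h11'.symm) h2
  refine ⟨key, ?_, ?_⟩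
  · refine ⟨fun x hx g => ?_⟩
    rw [Subgroup.mem_subgroupOf] at hx ⊢
    obtain ⟨k, hk⟩ := hx
    have hcoe : ((g * x * g⁻¹ : symmGroup n u) : FullG n) = ↑g * ↑x * (↑g)⁻¹ := rfl
    rw [hcoe, ← hk, ← conj_zpow]
    rcases key ↑g g.2 with h | h <;> rw [h]
    · exact zpow_mem (Subgroup.mem_zpowers _) k
    · exact zpow_mem (inv_mem (Subgroup.mem_zpowers _)) k
  · intro α hα
    rcases key α hα with h | h
    · have h' : α.1.2 * sigma1 n * (α.1.2)⁻¹ = sigma1 n := congrArg (fun g => g.1.2) h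
      rw [mul_inv_eq_iff_eq_mul] at h'
      exact mem_closure_of_comm n _ h'
    · have h' : α.1.2 * sigma1 n * (α.1.2)⁻¹ = (sigma1 n)⁻¹ :=
        congrArg (fun g => g.1.2) h
      exact mem_closure_of_conj_inv n _ h'

end
end

section
/- Let n ≥ 3. The groups C(n,k/ℓ) (for any k ≥ 1, ℓ coprime to k) and, for n odd, C'(n,2) and D'(n,1) all satisfy the rotating circle condition, while the groups D(n,k/ℓ) and, for n odd, D'(n,2) do not satisfy it. -/
noncomputable section

open Complex

variable {n : ℕ}

/-- The element `(κ, s₁, 0̄)`: reflection of the plane, the involution `s₁`, time reversal. -/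
def reflEl (n : ℕ) [NeZero n] : FullG n := ((Complex.conjLIE, sOne n), TimeSym.tref 0)

/-- The generator `g₀ = (R_{2πℓ/k}, e, 1/k)` of the extra symmetry of `C(n,k/ℓ)`. -/
def g0El (n k ℓ : ℕ) : FullG n := ((rotO ((ℓ : ℝ) / k), 1), TimeSym.trot (1 / k))

/-- The symmetry group `C(n, k/ℓ)`, generated by `𝔠` and `g₀`. -/
def Cgrp (n : ℕ) [NeZero n] (k ℓ : ℕ) : Subgroup (FullG n) :=
  Subgroup.closure {chorEl n, g0El n k ℓ}

/-- The symmetry group `D(n, k/ℓ)`, generated by `𝔠`, `g₀` and `(κ, s₁, 0̄)`. -/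
def Dgrp (n : ℕ) [NeZero n] (k ℓ : ℕ) : Subgroup (FullG n) :=
  Subgroup.closure {chorEl n, g0El n k ℓ, reflEl n}

open Fin.NatCast in
/-- For odd `n`, the unique square root `σ₂` of `σ₁` in `Σₙ`. -/
def sigma2 (n : ℕ) [NeZero n] : Equiv.Perm (Fin n) :=
  Equiv.addLeft (((n + 1) / 2 : ℕ) : Fin n)

/-- The generator `(κ, σ₂, -1/(2n))` of the exceptional group `C'(n,2)`. -/
def cpEl (n : ℕ) [NeZero n] : FullG n :=
  ((Complex.conjLIE, sigma2 n), TimeSym.trot (-(1 / (2 * n))))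

/-- The exceptional symmetry group `C'(n,2)` (for odd `n`), cyclic generated by `(κ, σ₂, -1/(2n))`. -/
def Cpgrp (n : ℕ) [NeZero n] : Subgroup (FullG n) := Subgroup.zpowers (cpEl n)

/-- The element `(R_π, s₁, 0̄)`. -/
def rpiEl (n : ℕ) [NeZero n] : FullG n := ((rotO (1 / 2), sOne n), TimeSym.tref 0)

/-- The exceptional symmetry group `D'(n,1)` (for odd `n`), generated by `𝔠` and `(R_π, s₁, 0̄)`. -/
def Dp1grp (n : ℕ) [NeZero n] : Subgroup (FullG n) :=
  Subgroup.closure {chorEl n, rpiEl n}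

/-- The exceptional symmetry group `D'(n,2)` (for odd `n`), generated by `(κ, σ₂, -1/(2n))`
and `(R_π, s₁, 0̄)`. -/
def Dp2grp (n : ℕ) [NeZero n] : Subgroup (FullG n) :=
  Subgroup.closure {cpEl n, rpiEl n}

/-- The symmetry group `D(n, ∞/ℓ)` of the speed-`ℓ` circular choreography, generated by `𝔠`,
`(κ, s₁, 0̄)` and all elements `(R_{2πℓθ}, e, θ)` for `θ ∈ S¹`. -/
def circGrp (n : ℕ) [NeZero n] (ℓ : ℕ) : Subgroup (FullG n) :=
  Subgroup.closure
    ({chorEl n, reflEl n} ∪ {g | ∃ θ : ℝ, g = ((rotO ((ℓ : ℝ) * θ), 1), TimeSym.trot θ)})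

/-- `H` is conjugate to `K` in `Γ × Ŝ¹`. -/
def IsConjTo {n : ℕ} (H K : Subgroup (FullG n)) : Prop :=
  ∃ γ : FullG n, Subgroup.map (MulAut.conj γ).toMonoidHom H = K

/-- `H ≺ K` : `H` is conjugate in `Γ × Ŝ¹` to a subgroup of `K`. -/
def SubConjTo {n : ℕ} (H K : Subgroup (FullG n)) : Prop :=
  ∃ γ : FullG n, Subgroup.map (MulAut.conj γ).toMonoidHom H ≤ K

/-- The rotating circle condition of Ferrario and Terracini for a symmetry group
`G ≤ Γ × Ŝ¹`: for every `t`, (i) `ρ(G_t) ⊆ SO(2)` and (ii) `ρ(G_{t,i})` is trivial for at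
least `n - 1` indices `i`, where `G_t` is the isotropy subgroup of `t` and `G_{t,i}` the
subgroup of `G_t` fixing the index `i`. -/
def RotatingCircleCondition (n : ℕ) (G : Subgroup (FullG n)) : Prop :=
  ∀ t : TimeCircle,
    (∀ g ∈ G, g.2.act t = t → IsRotO g.1.1) ∧
    (∃ J : Finset (Fin n), n - 1 ≤ J.card ∧
      ∀ i ∈ J, ∀ g ∈ G, g.2.act t = t → g.1.2 i = i → g.1.1 = 1)

/-! ### Auxiliary lemmas -/

open Fin.CommRing

section Aux

open TimeSym

/-- A "one-parameter subgroup" helper: zpow of values of an exponential-type map. -/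
lemma zpow_of_hom {M : Type*} [Group M] (f : ℝ → M) (h0 : f 0 = 1)
    (hadd : ∀ a b : ℝ, f (a + b) = f a * f b) (x : ℝ) (m : ℤ) : f x ^ m = f (m * x) := by
  have hinv : ∀ a : ℝ, f (-a) = (f a)⁻¹ := by
    intro a
    refine eq_inv_of_mul_eq_one_left ?_
    rw [← hadd]; simpa using h0
  induction m using Int.induction_on with
  | zero => simpa using h0.symm
  | succ k ih =>
      rw [zpow_add_one, ih, ← hadd]
      congr 1; push_cast; ring
  | pred k ih =>
      rw [zpow_sub_one, ih, ← hinv, ← hadd]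
      congr 1; push_cast; ring

lemma trot_zero : TimeSym.trot 0 = 1 := by
  ext <;> simp [TimeSym.trot]

lemma trot_add (a b : ℝ) : TimeSym.trot (a + b) = TimeSym.trot a * TimeSym.trot b := by
  ext <;> simp [TimeSym.trot, AddCircle.coe_add]

lemma trot_mul (a b : ℝ) : TimeSym.trot a * TimeSym.trot b = TimeSym.trot (a + b) :=
  (trot_add a b).symm

lemma trot_zpow (x : ℝ) (m : ℤ) : TimeSym.trot x ^ m = TimeSym.trot (m * x) :=
  zpow_of_hom _ trot_zero (fun a b => trot_add a b) x m

lemma trot_mul_tref (x y : ℝ) : TimeSym.trot x * TimeSym.tref y = TimeSym.tref (x + y) := by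
  ext <;> simp [TimeSym.trot, TimeSym.tref, AddCircle.coe_add]

lemma tref_mul_trot (x y : ℝ) : TimeSym.tref x * TimeSym.trot y = TimeSym.tref (x - y) := by
  ext <;> simp [TimeSym.trot, TimeSym.tref, AddCircle.coe_sub, sub_eq_add_neg]

lemma tref_mul_tref (x y : ℝ) : TimeSym.tref x * TimeSym.tref y = TimeSym.trot (x - y) := by
  ext <;> simp [TimeSym.trot, TimeSym.tref, AddCircle.coe_sub, sub_eq_add_neg]

lemma coe_eq_zero_iff' (x : ℝ) : (x : TimeCircle) = 0 ↔ ∃ m : ℤ, (m : ℝ) = x := by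
  rw [AddCircle.coe_eq_zero_iff]
  exact exists_congr fun m => by rw [zsmul_one]

lemma trot_act_self_iff (x : ℝ) (t : TimeCircle) :
    (TimeSym.trot x).act t = t ↔ ∃ m : ℤ, (m : ℝ) = x := by
  show ((x : ℝ) : TimeCircle) + t = t ↔ _
  rw [add_eq_right, coe_eq_zero_iff']

lemma tref_act_self_iff (x : ℝ) (t : TimeCircle) :
    (TimeSym.tref x).act t = t ↔ (x : TimeCircle) = t + t := by
  simp only [TimeSym.act, TimeSym.tref, if_pos]
  constructor
  · intro h; rwa [add_neg_eq_iff_eq_add] at h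
  · intro h; rw [h]; abel

lemma rotO_zero : rotO 0 = 1 := by
  unfold rotO
  rw [mul_zero, Circle.exp_zero, map_one]

lemma rotO_add (a b : ℝ) : rotO (a + b) = rotO a * rotO b := by
  unfold rotO
  rw [← map_mul, ← Circle.exp_add]
  congr 1; ring

lemma rotO_zpow (x : ℝ) (m : ℤ) : rotO x ^ m = rotO (m * x) :=
  zpow_of_hom _ rotO_zero rotO_add x m

lemma rotO_intCast (m : ℤ) : rotO (m : ℝ) = 1 := by
  unfold rotO
  have h : 2 * Real.pi * (m : ℝ) = (m : ℝ) * (2 * Real.pi) := by ring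
  rw [h, Circle.exp_int_mul_two_pi, map_one]

lemma isRotO_one : IsRotO 1 := by
  intro z
  simp [LinearIsometryEquiv.coe_one]

lemma isRotO_rotation (c : Circle) : IsRotO (rotation c) := by
  intro z
  rw [rotation_apply, rotation_apply, mul_one]

lemma isRotO_rotO (x : ℝ) : IsRotO (rotO x) := isRotO_rotation _

lemma not_isRotO_conjLIE : ¬ IsRotO Complex.conjLIE := by
  intro h
  have hI := h Complex.I
  rw [Complex.conjLIE_apply, Complex.conjLIE_apply, Complex.conj_I, map_one, one_mul] at hI
  have := congrArg Complex.im hI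
  norm_num at this

end Aux

section Aux2

variable {n : ℕ}

lemma prod_zpow {A B C : Type*} [Group A] [Group B] [Group C] (x : A) (y : B) (z : C) (m : ℤ) :
    (((x, y), z) : (A × B) × C) ^ m = ((x ^ m, y ^ m), z ^ m) := by
  refine Prod.ext (Prod.ext ?_ ?_) ?_
  · exact map_zpow ((MonoidHom.fst A B).comp (MonoidHom.fst (A × B) C)) _ m
  · exact map_zpow ((MonoidHom.snd A B).comp (MonoidHom.fst (A × B) C)) _ m
  · exact map_zpow (MonoidHom.snd (A × B) C) _ m

lemma chorEl_zpow [NeZero n] (a : ℤ) :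
    chorEl n ^ a = ((1, Equiv.addLeft ((a : ℤ) : Fin n)), TimeSym.trot (a * (-(1 / (n : ℝ))))) := by
  unfold chorEl sigma1
  rw [prod_zpow, one_zpow, Equiv.zsmul_addLeft, zsmul_one, trot_zpow]

lemma g0El_zpow (k ℓ : ℕ) (b : ℤ) :
    g0El n k ℓ ^ b = ((rotO (b * ((ℓ : ℝ) / k)), 1), TimeSym.trot (b * (1 / (k : ℝ)))) := by
  unfold g0El
  rw [prod_zpow, one_zpow, rotO_zpow, trot_zpow]

lemma cpEl_zpow [NeZero n] (m : ℤ) :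
    cpEl n ^ m = ((Complex.conjLIE ^ m, sigma2 n ^ m), TimeSym.trot (m * (-(1 / (2 * (n : ℝ)))))) := by
  unfold cpEl
  rw [prod_zpow, trot_zpow]

lemma commute_chor_g0 [NeZero n] (k ℓ : ℕ) : Commute (chorEl n) (g0El n k ℓ) := by
  show chorEl n * g0El n k ℓ = g0El n k ℓ * chorEl n
  unfold chorEl g0El
  rw [Prod.mk_mul_mk, Prod.mk_mul_mk, Prod.mk_mul_mk, Prod.mk_mul_mk]
  rw [one_mul, mul_one, one_mul, mul_one, trot_mul, trot_mul, add_comm]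

lemma mem_Cgrp [NeZero n] {k ℓ : ℕ} {g : FullG n} (hg : g ∈ Cgrp n k ℓ) :
    ∃ a b : ℤ, g = chorEl n ^ a * g0El n k ℓ ^ b := by
  have hc : Commute (chorEl n) (g0El n k ℓ) := commute_chor_g0 k ℓ
  let K : Subgroup (FullG n) :=
    { carrier := {g | ∃ a b : ℤ, g = chorEl n ^ a * g0El n k ℓ ^ b}
      one_mem' := ⟨0, 0, by simp⟩
      mul_mem' := by
        rintro x y ⟨a, b, rfl⟩ ⟨a', b', rfl⟩
        refine ⟨a + a', b + b', ?_⟩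
        rw [zpow_add, zpow_add, (hc.symm.zpow_zpow b a').mul_mul_mul_comm]
      inv_mem' := by
        rintro x ⟨a, b, rfl⟩
        refine ⟨-a, -b, ?_⟩
        rw [mul_inv_rev, ← zpow_neg, ← zpow_neg, (hc.zpow_zpow (-a) (-b)).symm.eq] }
  have hle : Cgrp n k ℓ ≤ K := by
    rw [Cgrp, Subgroup.closure_le]
    rintro x hx
    simp only [Set.mem_insert_iff, Set.mem_singleton_iff] at hx
    rcases hx with rfl | rfl
    · exact ⟨1, 0, by simp⟩
    · exact ⟨0, 1, by simp⟩
  exact hle hg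

lemma rel_rr [NeZero n] : rpiEl n * rpiEl n = 1 := by
  unfold rpiEl
  rw [Prod.mk_mul_mk, Prod.mk_mul_mk, ← rotO_add, tref_mul_tref, sub_zero, trot_zero]
  have h1 : (1 / 2 + 1 / 2 : ℝ) = ((1 : ℤ) : ℝ) := by norm_num
  have h2 : sOne n * sOne n = 1 := by
    ext j
    simp [sOne, Equiv.Perm.mul_apply]
  rw [h1, rotO_intCast, h2]
  rfl

lemma rel_r_c [NeZero n] (a : ℤ) : rpiEl n * chorEl n ^ a = chorEl n ^ (-a) * rpiEl n := by
  rw [chorEl_zpow, chorEl_zpow]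
  unfold rpiEl
  rw [Prod.mk_mul_mk, Prod.mk_mul_mk, Prod.mk_mul_mk, Prod.mk_mul_mk]
  rw [mul_one, one_mul, tref_mul_trot, trot_mul_tref, add_zero]
  have h1 : (0 : ℝ) - a * (-(1 / n)) = (-a : ℤ) * (-(1 / (n : ℝ))) := by push_cast; ring
  have h2 : sOne n * Equiv.addLeft ((a : ℤ) : Fin n) =
      Equiv.addLeft (((-a : ℤ) : ℤ) : Fin n) * sOne n := by
    ext j
    simp only [sOne, Equiv.Perm.mul_apply, Equiv.coe_addLeft, Equiv.neg_apply]
    push_cast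
    ring
  rw [h1, h2]

lemma mem_Dp1grp [NeZero n] {g : FullG n} (hg : g ∈ Dp1grp n) :
    ∃ a : ℤ, g = chorEl n ^ a ∨ g = chorEl n ^ a * rpiEl n := by
  have hrinv : (rpiEl n)⁻¹ = rpiEl n := inv_eq_of_mul_eq_one_right rel_rr
  let K : Subgroup (FullG n) :=
    { carrier := {g | ∃ a : ℤ, g = chorEl n ^ a ∨ g = chorEl n ^ a * rpiEl n}
      one_mem' := ⟨0, Or.inl (by simp)⟩
      mul_mem' := by
        rintro x y ⟨a, rfl | rfl⟩ ⟨b, rfl | rfl⟩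
        · exact ⟨a + b, Or.inl (zpow_add _ a b).symm⟩
        · exact ⟨a + b, Or.inr (by rw [← mul_assoc, ← zpow_add])⟩
        · refine ⟨a - b, Or.inr ?_⟩
          rw [mul_assoc, rel_r_c, ← mul_assoc, ← zpow_add, ← sub_eq_add_neg]
        · refine ⟨a - b, Or.inl ?_⟩
          rw [mul_assoc, ← mul_assoc (rpiEl n), rel_r_c, mul_assoc, rel_rr, mul_one,
            ← zpow_add, ← sub_eq_add_neg]
      inv_mem' := by
        rintro x ⟨a, rfl | rfl⟩
        · exact ⟨-a, Or.inl (by rw [zpow_neg])⟩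
        · refine ⟨a, Or.inr ?_⟩
          rw [mul_inv_rev, hrinv, ← zpow_neg, rel_r_c, neg_neg] }
  have hle : Dp1grp n ≤ K := by
    rw [Dp1grp, Subgroup.closure_le]
    rintro x hx
    simp only [Set.mem_insert_iff, Set.mem_singleton_iff] at hx
    rcases hx with rfl | rfl
    · exact ⟨1, Or.inl (by simp)⟩
    · exact ⟨0, Or.inr (by simp)⟩
  exact hle hg

lemma fin_add_self_eq_zero (hodd : Odd n) {x : Fin n} [NeZero n] (h : x + x = 0) : x = 0 := by
  have hv : (x.val + x.val) % n = 0 := by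
    have := congrArg Fin.val h
    rwa [Fin.val_add, Fin.val_zero] at this
  have hdvd : n ∣ 2 * x.val := Nat.dvd_of_mod_eq_zero (by rwa [two_mul])
  have hcop : Nat.Coprime n 2 := (Nat.coprime_two_left.mpr hodd).symm
  have hx : n ∣ x.val := by
    rcases hdvd with ⟨c, hc⟩
    exact (Nat.Coprime.dvd_of_dvd_mul_left hcop ⟨c, hc⟩ : n ∣ x.val)
  exact Fin.ext (by simpa [Nat.eq_zero_of_dvd_of_lt] using Nat.eq_zero_of_dvd_of_lt hx x.isLt)

end Aux2

section Aux3

variable {n : ℕ}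

lemma rcc_of (G : Subgroup (FullG n))
    (h1 : ∀ t : TimeCircle, ∀ g ∈ G, g.2.act t = t → IsRotO g.1.1)
    (h2 : ∀ t : TimeCircle, ∀ i i' : Fin n,
      (∃ g ∈ G, g.2.act t = t ∧ g.1.2 i = i ∧ g.1.1 ≠ 1) →
      (∃ g ∈ G, g.2.act t = t ∧ g.1.2 i' = i' ∧ g.1.1 ≠ 1) → i = i') :
    RotatingCircleCondition n G := by
  intro t
  refine ⟨h1 t, ?_⟩
  by_cases h : ∃ i : Fin n, ∃ g ∈ G, g.2.act t = t ∧ g.1.2 i = i ∧ g.1.1 ≠ 1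
  · obtain ⟨i₀, hi₀⟩ := h
    refine ⟨Finset.univ.erase i₀, ?_, ?_⟩
    · rw [Finset.card_erase_of_mem (Finset.mem_univ _), Finset.card_univ, Fintype.card_fin]
    · intro i hi g hg hact hfix
      by_contra hne
      exact Finset.ne_of_mem_erase hi (h2 t i i₀ ⟨g, hg, hact, hfix, hne⟩ hi₀)
  · refine ⟨Finset.univ, ?_, ?_⟩
    · rw [Finset.card_univ, Fintype.card_fin]; omega
    · intro i _ g hg hact hfix
      by_contra hne
      exact h ⟨i, g, hg, hact, hfix, hne⟩

end Aux3

/-- The groups `C(n,k/ℓ)` and, for odd `n`, `C'(n,2)` and `D'(n,1)` satisfy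
the rotating circle condition, while `D(n,k/ℓ)` and, for odd `n`, `D'(n,2)` do not. -/
theorem statement_11 (n : ℕ) (hn : 3 ≤ n) [NeZero n] :
    (∀ k ℓ : ℕ, 1 ≤ k → Nat.Coprime ℓ k → RotatingCircleCondition n (Cgrp n k ℓ)) ∧
    (Odd n → RotatingCircleCondition n (Cpgrp n)) ∧
    (Odd n → RotatingCircleCondition n (Dp1grp n)) ∧
    (∀ k ℓ : ℕ, 1 ≤ k → Nat.Coprime ℓ k → ¬ RotatingCircleCondition n (Dgrp n k ℓ)) ∧
    (Odd n → ¬ RotatingCircleCondition n (Dp2grp n)) := by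
  have hn0 : (n : ℝ) ≠ 0 := Nat.cast_ne_zero.mpr (NeZero.ne n)
  refine ⟨?_, ?_, ?_, ?_, ?_⟩
  · -- C(n, k/ℓ)
    intro k ℓ hk _hcop
    have hk0 : (k : ℝ) ≠ 0 := Nat.cast_ne_zero.mpr (by omega)
    -- if g ∈ Cgrp fixes t and an index, then ρ(g) = 1
    have key : ∀ (t : TimeCircle) (i : Fin n) (g : FullG n), g ∈ Cgrp n k ℓ →
        g.2.act t = t → g.1.2 i = i → g.1.1 = 1 := by
      intro t i g hg hact hfix
      obtain ⟨a, b, rfl⟩ := mem_Cgrp hg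
      rw [chorEl_zpow, g0El_zpow, Prod.mk_mul_mk, Prod.mk_mul_mk] at hact hfix ⊢
      simp only [mul_one, one_mul] at hact hfix ⊢
      rw [trot_mul, trot_act_self_iff] at hact
      obtain ⟨m, hm⟩ := hact
      have ha0 : ((a : ℤ) : Fin n) = 0 := by
        have := hfix
        rw [Equiv.coe_addLeft] at this
        exact add_eq_right.mp this
      obtain ⟨a', rfl⟩ := (CharP.intCast_eq_zero_iff (Fin n) n a).mp ha0
      have hb : (b : ℝ) = (k : ℝ) * ((m : ℝ) + a') := by
        have hm' : (m : ℝ) = -(a' : ℝ) + (b : ℝ) / k := by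
          rw [hm]; push_cast; field_simp
        field_simp at hm'
        linarith
      have hbz : b = (k : ℤ) * (m + a') := by exact_mod_cast hb
      have harg : (b : ℝ) * ((ℓ : ℝ) / k) = ((ℓ * (m + a') : ℤ) : ℝ) := by
        rw [hb]; push_cast; field_simp
      show rotO _ = 1
      rw [harg, rotO_intCast]
    refine rcc_of _ ?_ ?_
    · intro t g hg _hact
      obtain ⟨a, b, rfl⟩ := mem_Cgrp hg
      rw [chorEl_zpow, g0El_zpow, Prod.mk_mul_mk, Prod.mk_mul_mk]
      show IsRotO ((1 : O2) * rotO _)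
      rw [one_mul]
      exact isRotO_rotO _
    · rintro t i i' ⟨g, hg, hact, hfix, hne⟩ _
      exact absurd (key t i g hg hact hfix) hne
  · -- C'(n,2)
    intro _hodd
    have key : ∀ (t : TimeCircle) (g : FullG n), g ∈ Cpgrp n →
        g.2.act t = t → g.1.1 = 1 := by
      intro t g hg hact
      obtain ⟨m, rfl⟩ := Subgroup.mem_zpowers_iff.mp hg
      rw [cpEl_zpow] at hact ⊢
      rw [trot_act_self_iff] at hact
      obtain ⟨z, hz⟩ := hact
      have hm : m = 2 * (-((n : ℤ) * z)) := by
        have : (m : ℝ) = 2 * (-((n : ℝ) * z)) := by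
          field_simp at hz
          linarith
        exact_mod_cast this
      show Complex.conjLIE ^ m = 1
      rw [hm, zpow_mul, zpow_two]
      have hsq : Complex.conjLIE * Complex.conjLIE = 1 := by
        apply LinearIsometryEquiv.ext
        intro z
        have : (Complex.conjLIE * Complex.conjLIE) z = Complex.conjLIE (Complex.conjLIE z) := rfl
        rw [this, Complex.conjLIE_apply, Complex.conjLIE_apply, Complex.conj_conj]
        rfl
      rw [hsq, one_zpow]
    refine rcc_of _ ?_ ?_
    · intro t g hg hact
      rw [key t g hg hact]
      exact isRotO_one
    · rintro t i i' ⟨g, hg, hact, _hfix, hne⟩ _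
      exact absurd (key t g hg hact) hne
  · -- D'(n,1)
    intro hodd
    refine rcc_of _ ?_ ?_
    · intro t g hg _hact
      obtain ⟨a, rfl | rfl⟩ := mem_Dp1grp hg
      · rw [chorEl_zpow]
        exact isRotO_one
      · have hcomp : (chorEl n ^ a * rpiEl n).1.1 = 1 * rotO (1 / 2) := by
          rw [Prod.fst_mul, Prod.fst_mul, chorEl_zpow]
          rfl
        rw [hcomp, one_mul]
        exact isRotO_rotO _
    · have hperm : ∀ (b : ℤ) (j : Fin n),
          (chorEl n ^ b * rpiEl n).1.2 j = ((b : ℤ) : Fin n) + -j := by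
        intro b j
        rw [Prod.fst_mul, Prod.snd_mul, chorEl_zpow]
        simp [rpiEl, sOne, Equiv.Perm.mul_apply, Equiv.coe_addLeft]
      have htau : ∀ b : ℤ,
          (chorEl n ^ b * rpiEl n).2 = TimeSym.tref (b * (-(1 / (n : ℝ)))) := by
        intro b
        rw [Prod.snd_mul, chorEl_zpow]
        show TimeSym.trot _ * TimeSym.tref 0 = _
        rw [trot_mul_tref, add_zero]
      rintro t i i' ⟨g, hg, hact, hfix, hne⟩ ⟨g', hg', hact', hfix', hne'⟩
      obtain ⟨a, rfl | rfl⟩ := mem_Dp1grp hg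
      · exfalso; apply hne; rw [chorEl_zpow]
      obtain ⟨a', rfl | rfl⟩ := mem_Dp1grp hg'
      · exfalso; apply hne'; rw [chorEl_zpow]
      rw [hperm] at hfix hfix'
      rw [htau, tref_act_self_iff] at hact hact'
      have hii : ((a : ℤ) : Fin n) = i + i := by linear_combination hfix
      have hii' : ((a' : ℤ) : Fin n) = i' + i' := by linear_combination hfix'
      have hco : (((a * -(1 / (n : ℝ))) - (a' * -(1 / (n : ℝ))) : ℝ) : TimeCircle) = 0 := by
        rw [AddCircle.coe_sub, hact, hact', sub_self]
      rw [coe_eq_zero_iff'] at hco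
      obtain ⟨z, hz⟩ := hco
      have hz' : a' - a = n * z := by
        have hzr : (a' : ℝ) - a = n * z := by
          rw [hz]
          field_simp
          ring
        exact_mod_cast hzr
      have hcast : ((a' : ℤ) : Fin n) = ((a : ℤ) : Fin n) := by
        have h0 : ((a' - a : ℤ) : Fin n) = 0 :=
          (CharP.intCast_eq_zero_iff (Fin n) n _).mpr ⟨z, hz'⟩
        push_cast at h0
        linear_combination h0
      have hsum : (i - i') + (i - i') = 0 := by
        have : i + i = i' + i' := by rw [← hii, ← hii', hcast]
        linear_combination this
      exact sub_eq_zero.mp (fin_add_self_eq_zero hodd hsum)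
  · -- D(n,k/ℓ) fails
    intro k ℓ _hk _hcop h
    have hmem : reflEl n ∈ Dgrp n k ℓ := Subgroup.subset_closure (by simp)
    have hact : (reflEl n).2.act 0 = 0 := by
      show (TimeSym.tref 0).act 0 = 0
      rw [tref_act_self_iff, add_zero]
      norm_num
    exact not_isRotO_conjLIE ((h 0).1 (reflEl n) hmem hact)
  · -- D'(n,2) fails
    intro _hodd h
    set t : TimeCircle := ((-(1 / (4 * (n : ℝ))) : ℝ) : TimeCircle) with ht
    have hmem : cpEl n * rpiEl n ∈ Dp2grp n :=
      mul_mem (Subgroup.subset_closure (by simp)) (Subgroup.subset_closure (by simp))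
    have hact : (cpEl n * rpiEl n).2.act t = t := by
      show (TimeSym.trot (-(1 / (2 * (n : ℝ)))) * TimeSym.tref 0).act t = t
      rw [trot_mul_tref, add_zero, tref_act_self_iff, ht, ← AddCircle.coe_add]
      congr 1
      field_simp
      ring
    have hrot := (h t).1 _ hmem hact
    have hexp : ((Circle.exp (2 * Real.pi * (1 / 2)) : Circle) : ℂ) = -1 := by
      have h2 : (2 * Real.pi * (1 / 2) : ℝ) = Real.pi := by ring
      rw [h2, Circle.coe_exp, Complex.exp_pi_mul_I]
    have happ : ∀ z : ℂ, (cpEl n * rpiEl n).1.1 z = (starRingEnd ℂ) (-z) := by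
      intro z
      show (Complex.conjLIE * rotO (1 / 2)) z = _
      have hco : (Complex.conjLIE * rotO (1 / 2)) z = Complex.conjLIE (rotO (1 / 2) z) := rfl
      rw [hco, Complex.conjLIE_apply]
      congr 1
      show rotation _ z = -z
      rw [rotation_apply, hexp, neg_one_mul]
    have hI := hrot Complex.I
    have h1 := happ 1
    have h2 := happ Complex.I
    rw [h2, h1] at hI
    simp only [map_neg, Complex.conj_I, map_one, neg_neg] at hI
    -- hI : I = -1 * I
    have := congrArg Complex.im hI
    norm_num at this

end
end
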